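/- Let G be a finite simple graph and v a vertex with N_G(v) a clique. Then the set of simplices of I(G) is the disjoint union of: (a) ⋃_{u ∈ N_G(v)} I(G − N_G[u]); (b) I(G − N_G[v]) minus the union in (a); (c) for each u ∈ N_G(v), the sets {α ∪ {u} : α ∈ I(G − N_G[u])}; and (d) {α ∪ {v} : α ∈ I(G − N_G[v])}, where the families in (c) for distinct u are pairwise disjoint and disjoint from (a), (b), (d). -/

import Mathlib

open Finset

/-- A (nonempty-face) abstract simplicial complex on vertex set `V`:
faces are nonempty finite sets, closed under nonempty subsets. -/
def IsComplex {V : Type*} (X : Set (Finset V)) : Prop :=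
  (∀ s ∈ X, s.Nonempty) ∧ ∀ ⦃s t : Finset V⦄, s ∈ X → t ⊆ s → t.Nonempty → t ∈ X

/-- Nonempty independent sets of `G` avoiding the vertex set `U`;
this is the set of simplices of the independence complex `I(G − U)`. -/
def avoidIndep {V : Type*} (G : SimpleGraph V) (U : Set V) : Set (Finset V) :=
  {s | s.Nonempty ∧ (∀ x ∈ s, x ∉ U) ∧ ∀ x ∈ s, ∀ y ∈ s, ¬ G.Adj x y}

/-- The independence complex of `G` (set of nonempty simplices). -/
def indepComplex {V : Type*} (G : SimpleGraph V) : Set (Finset V) :=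
  avoidIndep G ∅

/-- A matching on the Hasse diagram of a simplicial complex `X`. -/
structure IsMatching {V : Type*} (X : Set (Finset V)) (M : Set (Finset V × Finset V)) : Prop where
  left_mem : ∀ p ∈ M, p.1 ∈ X
  right_mem : ∀ p ∈ M, p.2 ∈ X
  subset : ∀ p ∈ M, p.1 ⊆ p.2
  card_eq : ∀ p ∈ M, p.2.card = p.1.card + 1
  eq_of_shared : ∀ p ∈ M, ∀ q ∈ M,
    p.1 = q.1 ∨ p.1 = q.2 ∨ p.2 = q.1 ∨ p.2 = q.2 → p = q

/-- One step of the modified Hasse diagram: matched edges are reversed (point upwards),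
all other Hasse edges point from a simplex to its codimension-1 faces. -/
def matchStep {V : Type*} (X : Set (Finset V)) (M : Set (Finset V × Finset V))
    (σ τ : Finset V) : Prop :=
  σ ∈ X ∧ τ ∈ X ∧
    ((σ, τ) ∈ M ∨ (τ ⊆ σ ∧ σ.card = τ.card + 1 ∧ (τ, σ) ∉ M))

/-- An acyclic matching: reversing matched edges leaves the Hasse diagram acyclic. -/
def IsAcyclicMatching {V : Type*} (X : Set (Finset V)) (M : Set (Finset V × Finset V)) : Prop :=
  IsMatching X M ∧ ∀ σ, ¬ Relation.TransGen (matchStep X M) σ σ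

/-- A critical (unmatched) simplex. -/
def IsCritical {V : Type*} (X : Set (Finset V)) (M : Set (Finset V × Finset V))
    (σ : Finset V) : Prop :=
  σ ∈ X ∧ ∀ p ∈ M, p.1 ≠ σ ∧ p.2 ≠ σ

/-- The number of `d`-dimensional critical simplices. -/
noncomputable def critCount {V : Type*} (X : Set (Finset V)) (M : Set (Finset V × Finset V))
    (d : ℕ) : ℕ :=
  {σ | IsCritical X M σ ∧ σ.card = d + 1}.ncard

/-- A complex is collapsible if it admits an acyclic matching with a unique critical simplex. -/
def Collapsible {V : Type*} (X : Set (Finset V)) : Prop :=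
  ∃ M, IsAcyclicMatching X M ∧ ∃! σ, IsCritical X M σ

/-- A maximal face of a complex. -/
def IsMaximalFace {V : Type*} (X : Set (Finset V)) (σ : Finset V) : Prop :=
  σ ∈ X ∧ ∀ τ ∈ X, σ ⊆ τ → σ = τ

/-- All critical simplices of the matching are maximal faces,
except possibly a single critical 0-simplex. -/
def ExceptOneMaximal {V : Type*} (X : Set (Finset V)) (M : Set (Finset V × Finset V)) : Prop :=
  (∀ σ, IsCritical X M σ → ¬ IsMaximalFace X σ → σ.card = 1) ∧
  (∀ σ τ, IsCritical X M σ → IsCritical X M τ →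
    ¬ IsMaximalFace X σ → ¬ IsMaximalFace X τ → σ = τ)

/-- The geometric realization of a complex, as a subspace of `V → ℝ`. -/
def realizationSet {V : Type*} (X : Set (Finset V)) : Set (V → ℝ) :=
  {f | (∀ v, 0 ≤ f v) ∧ ∃ s ∈ X, (∀ v, f v ≠ 0 ↔ v ∈ s) ∧ ∑ v ∈ s, f v = 1}

/-- The base point of the `d`-dimensional unit sphere. -/
noncomputable def spherePt (d : ℕ) : Metric.sphere (0 : EuclideanSpace ℝ (Fin (d+1))) 1 :=
  ⟨EuclideanSpace.single 0 1, by simp⟩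

/-- Identify all base points of the given spheres with a single external point. -/
noncomputable def WedgeRel (c : ℕ → ℕ) :
    (Unit ⊕ Σ d : ℕ, Fin (c d) × Metric.sphere (0 : EuclideanSpace ℝ (Fin (d+1))) 1) →
    (Unit ⊕ Σ d : ℕ, Fin (c d) × Metric.sphere (0 : EuclideanSpace ℝ (Fin (d+1))) 1) → Prop :=
  fun x y => ∃ d i, x = Sum.inr ⟨d, i, spherePt d⟩ ∧ y = Sum.inl ()

/-- The wedge of spheres with `c d` spheres of dimension `d` (a point if all `c d = 0`). -/
noncomputable def WedgeOfSpheres (c : ℕ → ℕ) : Type :=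
  Quot (WedgeRel c)

noncomputable instance (c : ℕ → ℕ) : TopologicalSpace (WedgeOfSpheres c) :=
  instTopologicalSpaceQuot

/-- A universal vertex: adjacent to every other vertex. -/
def IsUniversal {V : Type*} (G : SimpleGraph V) (u : V) : Prop :=
  ∀ w, w ≠ u → G.Adj u w

/-- A chordal graph: no induced cycle of length at least 4. -/
def Chordal {W : Type*} (H : SimpleGraph W) : Prop :=
  ¬ ∃ n, 4 ≤ n ∧ ∃ f : ZMod n → W, Function.Injective f ∧
    ∀ i j, H.Adj (f i) (f j) ↔ (j = i + 1 ∨ i = j + 1)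

/-- The domination number of a graph. -/
noncomputable def dominationNumber {V : Type*} (G : SimpleGraph V) : ℕ :=
  sInf {n | ∃ S : Finset V, S.card = n ∧ ∀ w, w ∉ S → ∃ x ∈ S, G.Adj x w}

/-- `G` belongs to the family `𝒢 m n`: the blocks are the fibres of `P`
(all nonempty, i.e. `P` surjective), and two distinct vertices are adjacent
iff their block indices are comparable in the product order. -/
def GridGraph {V : Type*} (m n : ℕ) (G : SimpleGraph V)
    (P : V → Fin (m+1) × Fin (n+1)) : Prop :=
  Function.Surjective P ∧ ∀ x y, G.Adj x y ↔ x ≠ y ∧ (P x ≤ P y ∨ P y ≤ P x)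

/-- The closed neighbourhood `N_G[v]`. -/
def closedNbhd {V : Type*} (G : SimpleGraph V) (v : V) : Set V :=
  insert v (G.neighborSet v)

/-- Independent sets of `G` (including `∅`) avoiding the vertex set `U`;
the full set of simplices (with the empty simplex) of `I(G − U)`. -/
def avoidIndepE {V : Type*} (G : SimpleGraph V) (U : Set V) : Set (Finset V) :=
  {s | (∀ x ∈ s, x ∉ U) ∧ ∀ x ∈ s, ∀ y ∈ s, ¬ G.Adj x y}

/-- The independence complex of `G`, including the empty simplex. -/
def indepComplexE {V : Type*} (G : SimpleGraph V) : Set (Finset V) :=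
  avoidIndepE G ∅
theorem stmt_3 {V : Type*} [Fintype V] [DecidableEq V] (G : SimpleGraph V) (v : V)
    (hclique : ∀ x ∈ G.neighborSet v, ∀ y ∈ G.neighborSet v, x ≠ y → G.Adj x y)
    (A B D : Set (Finset V)) (C : V → Set (Finset V))
    (hA : A = ⋃ u ∈ G.neighborSet v, avoidIndepE G (closedNbhd G u))
    (hB : B = avoidIndepE G (closedNbhd G v) \ A)
    (hC : ∀ u, C u = (fun α => insert u α) '' avoidIndepE G (closedNbhd G u))
    (hD : D = (fun α => insert v α) '' avoidIndepE G (closedNbhd G v)) :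
    indepComplexE G = A ∪ B ∪ (⋃ u ∈ G.neighborSet v, C u) ∪ D ∧
    (∀ u₁ ∈ G.neighborSet v, ∀ u₂ ∈ G.neighborSet v, u₁ ≠ u₂ → Disjoint (C u₁) (C u₂)) ∧
    (∀ u ∈ G.neighborSet v, Disjoint (C u) A ∧ Disjoint (C u) B ∧ Disjoint (C u) D) ∧
    Disjoint A B ∧ Disjoint A D ∧ Disjoint B D := by
  have hCkey : ∀ u, ∀ s ∈ C u, u ∈ s ∧ ∀ x ∈ s, x ∈ closedNbhd G u → x = u := by
    intro u s hs
    rw [hC] at hs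
    obtain ⟨α, hα, rfl⟩ := hs
    refine ⟨mem_insert_self _ _, fun x hx hxN => ?_⟩
    rcases mem_insert.mp hx with rfl | hxα
    · rfl
    · exact absurd hxN (hα.1 x hxα)
  have hvN : ∀ u ∈ G.neighborSet v, v ∈ closedNbhd G u := fun u hu =>
    Set.mem_insert_iff.mpr (Or.inr (G.adj_symm hu))
  have huN : ∀ u₁ ∈ G.neighborSet v, ∀ u₂ ∈ G.neighborSet v, u₂ ∈ closedNbhd G u₁ := by
    intro u₁ h1 u₂ h2
    by_cases h : u₂ = u₁
    · exact h ▸ Set.mem_insert _ _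
    · exact Set.mem_insert_iff.mpr (Or.inr (hclique _ h1 _ h2 (Ne.symm h)))
  have hsub : ∀ U : Set V, avoidIndepE G U ⊆ indepComplexE G := by
    intro U s hs
    exact ⟨fun x hx => Set.notMem_empty x, hs.2⟩
  have hinsub : ∀ w, ∀ α ∈ avoidIndepE G (closedNbhd G w), insert w α ∈ indepComplexE G := by
    intro w α hα
    refine ⟨fun x hx => Set.notMem_empty x, fun x hx y hy hadj => ?_⟩
    rcases mem_insert.mp hx with rfl | hxα
    · rcases mem_insert.mp hy with rfl | hyα
      · exact G.irrefl hadj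
      · exact hα.1 y hyα (Set.mem_insert_iff.mpr (Or.inr hadj))
    · rcases mem_insert.mp hy with rfl | hyα
      · exact hα.1 x hxα (Set.mem_insert_iff.mpr (Or.inr (G.adj_symm hadj)))
      · exact hα.2 x hxα y hyα hadj
  have hAv : ∀ s ∈ A, v ∉ s := by
    intro s hs
    rw [hA] at hs
    obtain ⟨u, hu, hsu⟩ := Set.mem_iUnion₂.mp hs
    exact fun hvs => hsu.1 v hvs (hvN u hu)
  have hDv : ∀ s ∈ D, v ∈ s ∧ ∀ u ∈ G.neighborSet v, u ∉ s := by
    intro s hs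
    rw [hD] at hs
    obtain ⟨α, hα, rfl⟩ := hs
    refine ⟨mem_insert_self _ _, fun u hu hus => ?_⟩
    rcases mem_insert.mp hus with rfl | huα
    · exact G.irrefl hu
    · exact hα.1 u huα (Set.mem_insert_iff.mpr (Or.inr hu))
  -- main equality
  refine ⟨?_, ?_, ?_, ?_, ?_, ?_⟩
  · apply Set.Subset.antisymm
    · intro s hs
      by_cases hv : v ∈ s
      · refine Or.inr ?_
        rw [hD]
        refine ⟨s.erase v, ⟨?_, fun x hx y hy => hs.2 x (mem_of_mem_erase hx) y (mem_of_mem_erase hy)⟩, insert_erase hv⟩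
        intro x hx hxN
        rcases Set.mem_insert_iff.mp hxN with rfl | hadj
        · exact notMem_erase x s hx
        · exact hs.2 v hv x (mem_of_mem_erase hx) hadj
      · by_cases hu : ∃ u ∈ G.neighborSet v, u ∈ s
        · obtain ⟨u, huv, hus⟩ := hu
          refine Or.inl (Or.inr ?_)
          refine Set.mem_iUnion₂.mpr ⟨u, huv, ?_⟩
          rw [hC]
          refine ⟨s.erase u, ⟨?_, fun x hx y hy => hs.2 x (mem_of_mem_erase hx) y (mem_of_mem_erase hy)⟩, insert_erase hus⟩
          intro x hx hxN
          rcases Set.mem_insert_iff.mp hxN with rfl | hadj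
          · exact notMem_erase x s hx
          · exact hs.2 u hus x (mem_of_mem_erase hx) hadj
        · push_neg at hu
          have hav : s ∈ avoidIndepE G (closedNbhd G v) := by
            refine ⟨fun x hx hxN => ?_, hs.2⟩
            rcases Set.mem_insert_iff.mp hxN with rfl | hadj
            · exact hv hx
            · exact hu x hadj hx
          by_cases hAs : s ∈ A
          · exact Or.inl (Or.inl (Or.inl hAs))
          · exact Or.inl (Or.inl (Or.inr (by rw [hB]; exact ⟨hav, hAs⟩)))
    · intro s hs
      rcases hs with ((hsA | hsB) | hsC) | hsD
      · rw [hA] at hsA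
        obtain ⟨u, hu, hsu⟩ := Set.mem_iUnion₂.mp hsA
        exact hsub _ hsu
      · rw [hB] at hsB
        exact hsub _ hsB.1
      · obtain ⟨u, hu, hsu⟩ := Set.mem_iUnion₂.mp hsC
        rw [hC] at hsu
        obtain ⟨α, hα, rfl⟩ := hsu
        exact hinsub u α hα
      · rw [hD] at hsD
        obtain ⟨α, hα, rfl⟩ := hsD
        exact hinsub v α hα
  · intro u₁ h1 u₂ h2 hne
    rw [Set.disjoint_left]
    intro s hs1 hs2
    obtain ⟨hmem1, hkey1⟩ := hCkey u₁ s hs1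
    obtain ⟨hmem2, hkey2⟩ := hCkey u₂ s hs2
    exact hne (hkey2 u₁ hmem1 (huN u₂ h2 u₁ h1))
  · intro u hu
    refine ⟨?_, ?_, ?_⟩
    · rw [Set.disjoint_left]
      intro s hs hsA
      rw [hA] at hsA
      obtain ⟨u', hu', hsu'⟩ := Set.mem_iUnion₂.mp hsA
      exact hsu'.1 u (hCkey u s hs).1 (huN u' hu' u hu)
    · rw [Set.disjoint_left]
      intro s hs hsB
      rw [hB] at hsB
      exact hsB.1.1 u (hCkey u s hs).1 (Set.mem_insert_iff.mpr (Or.inr hu))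
    · rw [Set.disjoint_left]
      intro s hs hsD
      exact (hDv s hsD).2 u hu (hCkey u s hs).1
  · rw [hB]; exact Set.disjoint_sdiff_right
  · rw [Set.disjoint_left]
    intro s hsA hsD
    exact hAv s hsA (hDv s hsD).1
  · rw [Set.disjoint_left]
    intro s hsB hsD
    rw [hB] at hsB
    exact hsB.1.1 v (hDv s hsD).1 (Set.mem_insert _ _)
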